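/- Let x ∈ ℝⁿ with f(x) ≠ 0 and suppose the flow S_t x is defined and f(S_t x) ≠ 0 for all t ≥ 0. Let M be a C¹ function on a neighborhood of the forward orbit of x with values in the symmetric n×n matrices, and set φ₀(t) := f(S_t x)/‖f(S_t x)‖². Then for all t ≥ 0: d/dt [φ₀(t)^T M(S_t x) φ₀(t)] = φ₀(t)^T (LM(S_t x)) φ₀(t). -/

import Mathlib

open Matrix Set Filter MeasureTheory

/-- Euclidean norm of a vector in `ℝⁿ`. -/
noncomputable def enormR {n : ℕ} (v : Fin n → ℝ) : ℝ := Real.sqrt (∑ i, v i ^ 2)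

/-- Operator norm of a matrix induced by the Euclidean norm. -/
noncomputable def opn {n : ℕ} (A : Matrix (Fin n) (Fin n) ℝ) : ℝ :=
  ‖Matrix.toEuclideanCLM (𝕜 := ℝ) A‖

/-- The projection `P_x = I - f(x)f(x)ᵀ/‖f(x)‖²` onto the hyperplane perpendicular to `f(x)`. -/
noncomputable def Pm {n : ℕ} (f : (Fin n → ℝ) → Fin n → ℝ) (x : Fin n → ℝ) :
    Matrix (Fin n) (Fin n) ℝ :=
  1 - (enormR (f x) ^ 2)⁻¹ • Matrix.vecMulVec (f x) (f x)

/-- The differential operator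
`LM(x) = M′(x) + Df(x)ᵀM(x) + M(x)Df(x) - M(x)f(x)f(x)ᵀ(Df(x)+Df(x)ᵀ)/‖f(x)‖²
  - (Df(x)+Df(x)ᵀ)f(x)f(x)ᵀM(x)/‖f(x)‖²`,
where the orbital derivative `M′(x)` has entries `∇M_ij(x) ⋅ f(x)`. -/
noncomputable def LMop {n : ℕ} (f : (Fin n → ℝ) → Fin n → ℝ)
    (Df M : (Fin n → ℝ) → Matrix (Fin n) (Fin n) ℝ) (x : Fin n → ℝ) :
    Matrix (Fin n) (Fin n) ℝ :=
  (Matrix.of fun i j => fderiv ℝ (fun y => M y i j) x (f x))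
    + (Df x)ᵀ * M x + M x * Df x
    - (enormR (f x) ^ 2)⁻¹ • (M x * Matrix.vecMulVec (f x) (f x) * (Df x + (Df x)ᵀ))
    - (enormR (f x) ^ 2)⁻¹ • ((Df x + (Df x)ᵀ) * Matrix.vecMulVec (f x) (f x) * M x)

lemma vecMulVec_mulVec_eq {n : ℕ} (u v w : Fin n → ℝ) :
    Matrix.vecMulVec u v *ᵥ w = (v ⬝ᵥ w) • u := by
  funext i
  simp only [Matrix.mulVec, dotProduct, Matrix.vecMulVec_apply, Pi.smul_apply,
    smul_eq_mul, Finset.sum_mul]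
  exact Finset.sum_congr rfl fun j _ => by ring

/-- Lemma 4.1, equation (4.2): with `φ₀(t) = f(S_t x)/‖f(S_t x)‖²`,
`d/dt [φ₀(t)ᵀ M(S_t x) φ₀(t)] = φ₀(t)ᵀ (LM(S_t x)) φ₀(t)`. -/
theorem stmt9 {n : ℕ} (f : (Fin n → ℝ) → Fin n → ℝ)
    (Df : (Fin n → ℝ) → Matrix (Fin n) (Fin n) ℝ)
    (hf : ContDiff ℝ 1 f)
    (hDf : ∀ y, HasFDerivAt f (LinearMap.toContinuousLinearMap ((Df y).mulVecLin)) y)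
    (x : Fin n → ℝ) (hfx : f x ≠ 0)
    -- `g t = S_t x` is the forward trajectory through `x`
    (g : ℝ → Fin n → ℝ) (hg0 : g 0 = x)
    (hg : ∀ t ≥ (0:ℝ), HasDerivWithinAt g (f (g t)) (Set.Ici 0) t)
    (hfg : ∀ t ≥ (0:ℝ), f (g t) ≠ 0)
    -- `M` is C¹ and symmetric-matrix-valued on an open neighborhood of the forward orbit
    (V : Set (Fin n → ℝ)) (hV : IsOpen V) (hgV : ∀ t ≥ (0:ℝ), g t ∈ V)
    (M : (Fin n → ℝ) → Matrix (Fin n) (Fin n) ℝ)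
    (hM : ∀ i j, ContDiffOn ℝ 1 (fun y => M y i j) V)
    (hMsym : ∀ y ∈ V, (M y)ᵀ = M y)
    -- `φ₀ t = f(S_t x)/‖f(S_t x)‖²`
    (φ₀ : ℝ → Fin n → ℝ) (hφ₀ : ∀ t, φ₀ t = (enormR (f (g t)) ^ 2)⁻¹ • f (g t)) :
    ∀ t ≥ (0:ℝ),
      HasDerivWithinAt
        (fun τ => φ₀ τ ⬝ᵥ (M (g τ)).mulVec (φ₀ τ))
        (φ₀ t ⬝ᵥ (LMop f Df M (g t)).mulVec (φ₀ t))
        (Set.Ici 0) t := by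
  intro t ht
  have hmem := hgV t ht
  have hen : ∀ v : Fin n → ℝ, enormR v ^ 2 = ∑ i, v i ^ 2 := fun v =>
    Real.sq_sqrt (Finset.sum_nonneg fun i _ => sq_nonneg _)
  set h : ℝ → ℝ := fun τ => ∑ i, f (g τ) i ^ 2 with hh_def
  have hne : h t ≠ 0 := by
    have hft := hfg t ht
    obtain ⟨i, hi⟩ := Function.ne_iff.mp hft
    have : 0 < h t :=
      Finset.sum_pos' (fun j _ => sq_nonneg _) ⟨i, Finset.mem_univ i, (sq_nonneg _).lt_of_ne (Ne.symm (pow_ne_zero _ hi))⟩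
    exact this.ne'
  -- derivative of u = f ∘ g
  have hu : HasDerivWithinAt (fun τ => f (g τ)) (Df (g t) *ᵥ f (g t)) (Set.Ici 0) t := by
    have := (hDf (g t)).comp_hasDerivWithinAt t (hg t ht)
    simp at this
    exact this
  have hui : ∀ i, HasDerivWithinAt (fun τ => f (g τ) i) ((Df (g t) *ᵥ f (g t)) i)
      (Set.Ici 0) t := fun i => hasDerivWithinAt_pi.mp hu i
  -- derivative of entries of M ∘ g
  have hMij : ∀ i j, HasDerivWithinAt (fun τ => M (g τ) i j)
      (fderiv ℝ (fun y => M y i j) (g t) (f (g t))) (Set.Ici 0) t := by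
    intro i j
    have hd : DifferentiableAt ℝ (fun y => M y i j) (g t) :=
      ((hM i j).contDiffAt (hV.mem_nhds hmem)).differentiableAt one_ne_zero
    exact hd.hasFDerivAt.comp_hasDerivWithinAt t (hg t ht)
  -- derivative of h
  have hh : HasDerivWithinAt h (2 * (f (g t) ⬝ᵥ (Df (g t) *ᵥ f (g t)))) (Set.Ici 0) t := by
    have key : HasDerivWithinAt h
        (∑ i, ((2:ℕ) * f (g t) i ^ 1 * (Df (g t) *ᵥ f (g t)) i)) (Set.Ici 0) t :=
      HasDerivWithinAt.fun_sum fun i _ => (hui i).fun_pow 2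
    convert key using 1
    simp only [dotProduct, Finset.mul_sum, pow_one, Nat.cast_ofNat]
    exact Finset.sum_congr rfl fun j _ => by ring
  -- derivative of A = u ⬝ M u
  set M' : Matrix (Fin n) (Fin n) ℝ :=
    Matrix.of fun i j => fderiv ℝ (fun y => M y i j) (g t) (f (g t)) with hM'_def
  set u' : Fin n → ℝ := Df (g t) *ᵥ f (g t) with hu'_def
  have hA : HasDerivWithinAt (fun τ => f (g τ) ⬝ᵥ M (g τ) *ᵥ f (g τ))
      (u' ⬝ᵥ M (g t) *ᵥ f (g t) + f (g t) ⬝ᵥ M' *ᵥ f (g t) + f (g t) ⬝ᵥ M (g t) *ᵥ u')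
      (Set.Ici 0) t := by
    have key : HasDerivWithinAt
        (fun τ => ∑ i, f (g τ) i * ∑ j, M (g τ) i j * f (g τ) j)
        (∑ i, (u' i * ∑ j, M (g t) i j * f (g t) j
          + f (g t) i * ∑ j, (fderiv ℝ (fun y => M y i j) (g t) (f (g t)) * f (g t) j
            + M (g t) i j * u' j))) (Set.Ici 0) t := by
      refine HasDerivWithinAt.fun_sum fun i _ => (hui i).fun_mul ?_
      exact HasDerivWithinAt.fun_sum fun j _ => (hMij i j).fun_mul (hui j)
    have heqf : (fun τ => f (g τ) ⬝ᵥ M (g τ) *ᵥ f (g τ))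
        = fun τ => ∑ i, f (g τ) i * ∑ j, M (g τ) i j * f (g τ) j := by
      funext τ
      simp [dotProduct, Matrix.mulVec]
    rw [heqf]
    convert key using 1
    simp only [dotProduct, Matrix.mulVec, hM'_def, Matrix.of_apply, mul_add,
      Finset.sum_add_distrib, Finset.mul_sum]
    ring_nf
  -- rewrite the function as h⁻¹ * (h⁻¹ * A)
  have hFeq : (fun τ => φ₀ τ ⬝ᵥ (M (g τ)).mulVec (φ₀ τ))
      = fun τ => (h τ)⁻¹ * ((h τ)⁻¹ * (f (g τ) ⬝ᵥ M (g τ) *ᵥ f (g τ))) := by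
    funext τ
    rw [hφ₀, hen]
    simp only [smul_dotProduct, dotProduct_smul, Matrix.mulVec_smul,
      smul_eq_mul]
    rfl
  rw [hFeq]
  have hinv : HasDerivWithinAt (fun τ => (h τ)⁻¹)
      (-(2 * (f (g t) ⬝ᵥ u')) / h t ^ 2) (Set.Ici 0) t := hh.inv hne
  have hD := hinv.fun_mul (hinv.fun_mul hA)
  convert hD using 1
  case e'_4 => rfl
  case e'_5 => rfl
  -- now a scalar identity
  have hT : ∀ w, f (g t) ⬝ᵥ (Df (g t))ᵀ *ᵥ w = (Df (g t) *ᵥ f (g t)) ⬝ᵥ w := fun w => by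
    rw [Matrix.dotProduct_mulVec, Matrix.vecMul_transpose]
  rw [hφ₀, hen]
  simp only [LMop, hen, Matrix.sub_mulVec, Matrix.add_mulVec, Matrix.smul_mulVec,
    ← Matrix.mulVec_mulVec, vecMulVec_mulVec_eq, Matrix.mulVec_smul, Matrix.mulVec_add,
    dotProduct_sub, dotProduct_add, dotProduct_smul,
    smul_dotProduct, smul_eq_mul, hT, ← hh_def, ← hM'_def, ← hu'_def]
  rw [show (Df (g t) *ᵥ f (g t)) ⬝ᵥ f (g t) = f (g t) ⬝ᵥ u' from dotProduct_comm _ _]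
  rw [show (∑ i, f (g t) i ^ 2) = h t from rfl]
  field_simp
  ring
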